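/- Let λ > -1/2, -1 < s < 1, and k ≥ 2. Then ∫_{-1}^{s} (s-x)(1-x²)^{λ-1/2} C_k^λ(x) dx = ∫_{s}^{1} (x-s)(1-x²)^{λ-1/2} C_k^λ(x) dx = (4λ(λ+1)/((k-1)k(k+2λ)(k+2λ+1))) (1-s²)^{λ+3/2} C_{k-2}^{λ+2}(s). -/

import Mathlib

open scoped Real BigOperators

open intervalIntegral MeasureTheory Set

/-- Pochhammer symbol `(lam)_m`. -/
noncomputable def poch (lam : ℝ) (m : ℕ) : ℝ := (ascPochhammer ℝ m).eval lam

/-- Gegenbauer polynomial `C_k^lam(x)`, via its explicit representation. -/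
noncomputable def gegen (lam : ℝ) (k : ℕ) (x : ℝ) : ℝ :=
  ∑ j ∈ Finset.range (k / 2 + 1),
    (-1 : ℝ) ^ j * poch lam (k - j) / ((Nat.factorial j : ℝ) * (Nat.factorial (k - 2 * j) : ℝ))
      * (2 * x) ^ (k - 2 * j)

lemma poch_succ (lam : ℝ) (n : ℕ) : poch lam (n+1) = poch lam n * (lam + n) := by
  simp [poch, ascPochhammer_succ_right, Polynomial.eval_mul]

lemma poch_succ_left (lam : ℝ) (n : ℕ) : poch lam (n+1) = lam * poch (lam+1) n := by
  simp [poch, ascPochhammer_succ_left, Polynomial.eval_mul, Polynomial.eval_comp]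

noncomputable def cog (lam : ℝ) (m j : ℕ) : ℝ :=
  if 2*j ≤ m then (-1:ℝ)^j * poch lam (m-j) / ((Nat.factorial j : ℝ) * (Nat.factorial (m-2*j) : ℝ)) else 0

noncomputable def coD (lam : ℝ) (k i : ℕ) : ℝ :=
  if 2*i ≤ k then (-1:ℝ)^i * poch (lam+1) (k-1-i) / ((Nat.factorial i : ℝ) * (Nat.factorial (k-2*i) : ℝ)) else 0

noncomputable def gegenD (lam : ℝ) (k : ℕ) (x : ℝ) : ℝ :=
  ∑ i ∈ Finset.range (k+1), coD lam k i * (2*x)^(k-2*i)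

noncomputable def dgegen (lam : ℝ) (m : ℕ) (x : ℝ) : ℝ :=
  ∑ j ∈ Finset.range (m+2), cog lam m j * (2*((m-2*j : ℕ):ℝ)) * (2*x)^(m-2*j-1)

lemma gegen_eq_sum (lam : ℝ) (m : ℕ) (x : ℝ) :
    gegen lam m x = ∑ j ∈ Finset.range (m+2), cog lam m j * (2*x)^(m-2*j) := by
  rw [gegen]
  rw [← Finset.sum_subset (Finset.range_subset_range.mpr (by omega : m/2+1 ≤ m+2))
    (fun j _ hj => by
      have : ¬ (2*j ≤ m) := by simp only [Finset.mem_range] at hj ⊢; omega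
      simp [cog, this])]
  refine Finset.sum_congr rfl fun j hj => ?_
  have h2 : 2*j ≤ m := by simp only [Finset.mem_range] at hj; omega
  rw [cog, if_pos h2]

lemma gegen_eq_mul (lam : ℝ) (k : ℕ) (hk : 1 ≤ k) (x : ℝ) :
    gegen lam k x = lam * gegenD lam k x := by
  rw [gegen, gegenD, Finset.mul_sum]
  rw [← Finset.sum_subset (Finset.range_subset_range.mpr (by omega : k/2+1 ≤ k+1))
    (fun i _ hi => by
      have : ¬ (2*i ≤ k) := by simp only [Finset.mem_range] at hi ⊢; omega
      simp [coD, this])]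
  refine Finset.sum_congr rfl fun i hi => ?_
  have h2 : 2*i ≤ k := by simp only [Finset.mem_range] at hi; omega
  have h3 : k - i = (k - 1 - i) + 1 := by omega
  rw [coD, if_pos h2, h3, poch_succ_left]
  ring

lemma hasDerivAt_gegen (lam : ℝ) (m : ℕ) (x : ℝ) :
    HasDerivAt (fun y => gegen lam m y) (dgegen lam m x) x := by
  have h : (fun y => gegen lam m y)
      = fun y => ∑ j ∈ Finset.range (m+2), cog lam m j * (2*y)^(m-2*j) :=
    funext fun y => gegen_eq_sum lam m y
  rw [h, dgegen]
  refine HasDerivAt.fun_sum fun j _ => ?_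
  have h2 : HasDerivAt (fun y : ℝ => 2*y) 2 x := by
    simpa using (hasDerivAt_id x).const_mul (2:ℝ)
  have h3 := (h2.pow (m-2*j)).const_mul (cog lam m j)
  refine h3.congr_deriv (Eq.symm ?_)
  push_cast
  ring

lemma coeff_succ (lam : ℝ) (m j : ℕ) :
    cog (lam+1) m j * (2*((m-2*j:ℕ):ℝ))
      - cog (lam+1) m (j+1) * ((((m-2*(j+1):ℕ):ℝ) + 2*lam+1)/2)
    = -(((m:ℝ)+1) * (((m:ℝ)+1)+2*lam) / 2) * coD lam (m+1) (j+1) := by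
  have fj : ((Nat.factorial j : ℕ):ℝ) ≠ 0 := Nat.cast_ne_zero.mpr (Nat.factorial_ne_zero j)
  by_cases hA : 2*j+2 ≤ m
  · obtain ⟨q, hq⟩ : ∃ q, m - 2*j = q + 2 := ⟨m - 2*j - 2, by omega⟩
    obtain ⟨r, hr⟩ : ∃ r, m - j = r + 1 := ⟨m - j - 1, by omega⟩
    have e1 : m - (j+1) = r := by omega
    have e2 : m + 1 - 1 - (j+1) = r := by omega
    have e3 : m - 2*(j+1) = q := by omega
    have e4 : m + 1 - 2*(j+1) = q + 1 := by omega
    rw [cog, cog, coD, if_pos (by omega), if_pos (by omega), if_pos (by omega),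
      hq, hr, e1, e2, e3, e4, poch_succ]
    have hm : (m:ℝ) = (q:ℝ) + 2*(j:ℝ) + 2 := by exact_mod_cast congrArg (Nat.cast (R := ℝ)) (by omega : m = q + 2*j + 2)
    have hrr : (r:ℝ) = (q:ℝ) + (j:ℝ) + 1 := by exact_mod_cast congrArg (Nat.cast (R := ℝ)) (by omega : r = q + j + 1)
    have fq : ((Nat.factorial q : ℕ):ℝ) ≠ 0 := Nat.cast_ne_zero.mpr (Nat.factorial_ne_zero q)
    simp only [Nat.factorial_succ, pow_succ]
    push_cast
    rw [hm, hrr]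
    field_simp
    ring
  · by_cases hB : m = 2*j+1
    · subst hB
      have e0 : 2*j+1 - 2*j = 1 := by omega
      have e1 : 2*j+1 - j = j + 1 := by omega
      have e2 : 2*j+1+1-1-(j+1) = j := by omega
      have e3 : 2*j+1+1-2*(j+1) = 0 := by omega
      rw [cog, cog, coD, if_pos (by omega), if_neg (by omega), if_pos (by omega),
        e0, e1, e2, e3, poch_succ]
      simp only [Nat.factorial_succ, Nat.factorial_zero, Nat.factorial_one, pow_succ]
      push_cast
      field_simp
      ring
    · have h1 : ¬(2*(j+1) ≤ m) := by omega
      have h2 : ¬(2*(j+1) ≤ m+1) := by omega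
      by_cases hD : m = 2*j
      · have e0 : m - 2*j = 0 := by omega
        rw [cog, cog, coD, if_pos (by omega), if_neg h1, if_neg h2, e0]
        simp
      · rw [cog, cog, coD, if_neg (by omega), if_neg h1, if_neg h2]
        simp

lemma coeff_zero (lam : ℝ) (m : ℕ) :
    -(cog (lam+1) m 0 * (((m:ℝ) + 2*lam+1)/2))
    = -(((m:ℝ)+1) * (((m:ℝ)+1)+2*lam) / 2) * coD lam (m+1) 0 := by
  have fm : ((Nat.factorial m : ℕ):ℝ) ≠ 0 := Nat.cast_ne_zero.mpr (Nat.factorial_ne_zero m)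
  have hm1 : (0:ℝ) < (m:ℝ) + 1 := by positivity
  rw [cog, coD, if_pos (by omega), if_pos (by omega)]
  simp only [Nat.sub_zero, Nat.mul_zero, Nat.add_sub_cancel, Nat.factorial_succ, pow_zero,
    Nat.factorial_zero]
  push_cast
  field_simp
  ring

lemma sum_shift (A B C : ℕ → ℝ) (n : ℕ)
    (hA : A (n+1) = 0)
    (h0 : -(B 0) = C 0)
    (hs : ∀ j, j < n+1 → A j - B (j+1) = C (j+1)) :
    (∑ j ∈ Finset.range (n+2), A j) - (∑ j ∈ Finset.range (n+2), B j)
      = ∑ j ∈ Finset.range (n+2), C j := by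
  rw [Finset.sum_range_succ A, hA, add_zero, Finset.sum_range_succ' B, Finset.sum_range_succ' C]
  have h : ∑ j ∈ Finset.range (n+1), A j - ∑ j ∈ Finset.range (n+1), B (j+1)
      = ∑ j ∈ Finset.range (n+1), C (j+1) := by
    rw [← Finset.sum_sub_distrib]
    exact Finset.sum_congr rfl fun j hj => hs j (Finset.mem_range.mp hj)
  linarith [h]

lemma key (lam : ℝ) (m : ℕ) (x : ℝ) :
    (1 - x^2) * dgegen (lam+1) m x - (2*lam+1) * x * gegen (lam+1) m x
    = -(((m:ℝ)+1) * (((m:ℝ)+1)+2*lam) / 2) * gegenD lam (m+1) x := by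
  rw [gegen_eq_sum, dgegen, gegenD, Finset.mul_sum, Finset.mul_sum, Finset.mul_sum,
    ← Finset.sum_sub_distrib]
  have hL : ∀ j ∈ Finset.range (m+2),
      (1-x^2) * (cog (lam+1) m j * (2*((m-2*j:ℕ):ℝ)) * (2*x)^(m-2*j-1))
        - (2*lam+1)*x*(cog (lam+1) m j * (2*x)^(m-2*j))
      = (fun j => cog (lam+1) m j * (2*((m-2*j:ℕ):ℝ)) * (2*x)^(m-2*j-1)) j
        - (fun j => cog (lam+1) m j * ((((m-2*j:ℕ):ℝ) + 2*lam+1)/2) * (2*x)^(m+1-2*j)) j := by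
    intro j _
    simp only []
    by_cases h2 : 2*j ≤ m
    · by_cases h0 : m = 2*j
      · have e1 : m - 2*j = 0 := by omega
        have e2 : m - 2*j - 1 = 0 := by omega
        have e3 : m + 1 - 2*j = 1 := by omega
        rw [e2, e3, e1]
        push_cast
        ring
      · obtain ⟨p, hp⟩ : ∃ p, m - 2*j = p + 1 := ⟨m - 2*j - 1, by omega⟩
        have e2 : m - 2*j - 1 = p := by omega
        have e3 : m + 1 - 2*j = p + 2 := by omega
        rw [e2, e3, hp]
        push_cast
        ring
    · rw [cog, if_neg h2]; ring
  rw [Finset.sum_congr rfl hL, Finset.sum_sub_distrib]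
  refine sum_shift _ _ (fun i => -(((m:ℝ)+1) * (((m:ℝ)+1)+2*lam) / 2) * (coD lam (m+1) i * (2*x)^(m+1-2*i))) m ?_ ?_ ?_
  · have : cog (lam+1) m (m+1) = 0 := by rw [cog, if_neg (by omega)]
    simp [this]
  · simp only [Nat.mul_zero, Nat.sub_zero]
    linear_combination (2*x)^(m+1) * coeff_zero lam m
  · intro j _
    have e : m + 1 - 2*(j+1) = m - 2*j - 1 := by omega
    simp only [e]
    linear_combination (2*x)^(m-2*j-1) * coeff_succ lam m j

lemma continuous_gegen (lam : ℝ) (m : ℕ) : Continuous (fun x => gegen lam m x) := by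
  unfold gegen
  exact continuous_finset_sum _ fun j _ =>
    (continuous_const.mul ((continuous_const.mul continuous_id).pow _))

lemma continuous_gegenD (lam : ℝ) (m : ℕ) : Continuous (fun x => gegenD lam m x) := by
  unfold gegenD
  exact continuous_finset_sum _ fun j _ =>
    (continuous_const.mul ((continuous_const.mul continuous_id).pow _))

lemma continuous_weight {p : ℝ} (hp : 0 ≤ p) : Continuous (fun x : ℝ => (1-x^2)^p) := by
  refine continuous_iff_continuousAt.mpr fun x => ?_
  have h1 : Continuous fun y : ℝ => 1 - y^2 := by continuity
  exact (Real.continuousAt_rpow_const _ _ (Or.inr hp)).comp h1.continuousAt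

lemma hasDerivAt_G (lam : ℝ) (m : ℕ) {x : ℝ} (hx1 : -1 < x) (hx2 : x < 1) :
    HasDerivAt (fun y => (1-y^2)^(lam+1/2) * gegen (lam+1) m y)
      (-(((m:ℝ)+1)*(((m:ℝ)+1)+2*lam)/2) * ((1-x^2)^(lam-1/2) * gegenD lam (m+1) x)) x := by
  have hpos : 0 < 1 - x^2 := by nlinarith
  have h1 : HasDerivAt (fun y : ℝ => 1 - y^2) (-(2*x)) x := by
    have := ((hasDerivAt_pow 2 x).const_sub 1)
    simpa using this
  have h2 : HasDerivAt (fun y : ℝ => (1-y^2)^(lam+1/2))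
      ((lam+1/2) * (1-x^2)^(lam+1/2-1) * (-(2*x))) x :=
    by have h := (Real.hasDerivAt_rpow_const (p := lam+1/2) (x := 1-x^2) (Or.inl hpos.ne')).comp x h1; exact h
  have h4 := h2.mul (hasDerivAt_gegen (lam+1) m x)
  refine h4.congr_deriv (Eq.symm ?_)
  have e1 : lam+1/2-1 = lam-1/2 := by ring
  have e2 : (1-x^2)^(lam+1/2) = (1-x^2)^(lam-1/2) * (1-x^2) := by
    rw [show lam+1/2 = (lam-1/2)+1 by ring, Real.rpow_add hpos, Real.rpow_one]
  rw [e1, e2]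
  linear_combination (-(1:ℝ)) * (1-x^2)^(lam-1/2) * key lam m x

lemma II_left {r : ℝ} (hr : -1 < r) {Q : ℝ → ℝ} (hQ : Continuous Q) {b : ℝ}
    (hb1 : -1 ≤ b) (hb2 : b < 1) :
    IntervalIntegrable (fun x => (1-x^2)^r * Q x) volume (-1) b := by
  have base : IntervalIntegrable (fun x : ℝ => (x+1)^r) volume (-1) b := by
    have h := (intervalIntegrable_rpow' (a := 0) (b := b+1) hr).comp_add_right 1
    norm_num at h
    exact h
  have hcont : ContinuousOn (fun x : ℝ => (1-x)^r * Q x) (Set.uIcc (-1) b) := by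
    have hsub : Set.uIcc (-1:ℝ) b ⊆ Set.Iic b := by
      rw [Set.uIcc_of_le hb1]; exact Set.Icc_subset_Iic_self
    refine ContinuousOn.mul ?_ hQ.continuousOn
    intro x hx
    have hxb : x ≤ b := hsub hx
    have hne : (1:ℝ) - x ≠ 0 := by nlinarith
    exact ((Real.continuousAt_rpow_const _ _ (Or.inl hne)).comp
      (by continuity : Continuous fun y : ℝ => 1 - y).continuousAt).continuousWithinAt
  have main := base.mul_continuousOn hcont
  rw [intervalIntegrable_iff, Set.uIoc_of_le hb1] at main ⊢
  refine main.congr_fun (fun x hx => ?_) measurableSet_Ioc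
  have h1 : (0:ℝ) ≤ x+1 := by linarith [hx.1]
  have h2 : (0:ℝ) ≤ 1-x := by linarith [hx.2, hb2]
  show (x+1)^r * ((1-x)^r * Q x) = (1-x^2)^r * Q x
  rw [show (1:ℝ)-x^2 = (x+1)*(1-x) by ring, Real.mul_rpow h1 h2]
  ring

lemma II_right {r : ℝ} (hr : -1 < r) {Q : ℝ → ℝ} (hQ : Continuous Q) {a : ℝ}
    (ha1 : -1 < a) (ha2 : a ≤ 1) :
    IntervalIntegrable (fun x => (1-x^2)^r * Q x) volume a 1 := by
  have base : IntervalIntegrable (fun x : ℝ => (1-x)^r) volume a 1 := by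
    have h := (intervalIntegrable_rpow' (a := 1-a) (b := 0) hr).comp_sub_left 1
    norm_num at h
    exact h
  have hcont : ContinuousOn (fun x : ℝ => (x+1)^r * Q x) (Set.uIcc a 1) := by
    have hsub : Set.uIcc a (1:ℝ) ⊆ Set.Ici a := by
      rw [Set.uIcc_of_le ha2]; exact Set.Icc_subset_Ici_self
    refine ContinuousOn.mul ?_ hQ.continuousOn
    intro x hx
    have hxa : a ≤ x := hsub hx
    have hne : x + 1 ≠ 0 := by nlinarith
    exact (((continuous_id.add continuous_const).continuousAt (x := x)).rpow_const
      (Or.inl hne)).continuousWithinAt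
  have main := base.mul_continuousOn hcont
  rw [intervalIntegrable_iff, Set.uIoc_of_le ha2] at main ⊢
  refine main.congr_fun (fun x hx => ?_) measurableSet_Ioc
  have h1 : (0:ℝ) ≤ x+1 := by linarith [hx.1]
  have h2 : (0:ℝ) ≤ 1-x := by linarith [hx.2]
  show (1-x)^r * ((x+1)^r * Q x) = (1-x^2)^r * Q x
  rw [show (1:ℝ)-x^2 = (1-x)*(x+1) by ring, Real.mul_rpow h2 h1]
  ring

section main
variable (lam s : ℝ) (k : ℕ)

noncomputable def Gfun (lam : ℝ) (k : ℕ) : ℝ → ℝ :=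
  fun x => (1-x^2)^(lam+1/2) * gegen (lam+1) (k-1) x
noncomputable def dGfun (lam : ℝ) (k : ℕ) : ℝ → ℝ :=
  fun x => -((k:ℝ)*((k:ℝ)+2*lam)/2) * ((1-x^2)^(lam-1/2) * gegenD lam k x)
noncomputable def Hfun (lam : ℝ) (k : ℕ) : ℝ → ℝ :=
  fun x => (1-x^2)^(lam+1+1/2) * gegen (lam+1+1) (k-2) x
noncomputable def dHfun (lam : ℝ) (k : ℕ) : ℝ → ℝ :=
  fun x => -(((k:ℝ)-1)*((k:ℝ)+2*lam+1)/2) * ((1-x^2)^(lam+1/2) * gegenD (lam+1) (k-1) x)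

lemma hG (hk : 2 ≤ k) {x : ℝ} (hx1 : -1 < x) (hx2 : x < 1) :
    HasDerivAt (Gfun lam k) (dGfun lam k x) x := by
  have h := hasDerivAt_G lam (k-1) hx1 hx2
  have e1 : k - 1 + 1 = k := by omega
  have c1 : ((k-1:ℕ):ℝ) + 1 = (k:ℝ) := by
    rw [Nat.cast_sub (by omega)]; ring
  rw [e1, c1] at h
  exact h

lemma hH (hk : 2 ≤ k) {x : ℝ} (hx1 : -1 < x) (hx2 : x < 1) :
    HasDerivAt (Hfun lam k) (dHfun lam k x) x := by
  have h := hasDerivAt_G (lam+1) (k-2) hx1 hx2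
  have e1 : k - 2 + 1 = k - 1 := by omega
  have c1 : ((k-2:ℕ):ℝ) + 1 = (k:ℝ) - 1 := by
    rw [Nat.cast_sub (by omega)]; push_cast; ring
  rw [e1, c1] at h
  have e2 : (lam+1) - 1/2 = lam + 1/2 := by ring
  rw [e2] at h
  refine h.congr_deriv ?_
  unfold dHfun
  ring

lemma contG (hlam : -1/2 < lam) : Continuous (Gfun lam k) :=
  (continuous_weight (by linarith : (0:ℝ) ≤ lam + 1/2)).mul (continuous_gegen _ _)

lemma contH (hlam : -1/2 < lam) : Continuous (Hfun lam k) :=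
  (continuous_weight (by linarith : (0:ℝ) ≤ lam + 1 + 1/2)).mul (continuous_gegen _ _)

lemma contdH (hlam : -1/2 < lam) : Continuous (dHfun lam k) :=
  continuous_const.mul
    (((continuous_weight (by linarith : (0:ℝ) ≤ lam + 1/2))).mul (continuous_gegenD _ _))

lemma G_neg_one (hlam : -1/2 < lam) : Gfun lam k (-1) = 0 := by
  have h0 : lam + 1/2 ≠ 0 := ne_of_gt (by linarith)
  simp only [Gfun]
  norm_num [Real.zero_rpow h0]

lemma G_one (hlam : -1/2 < lam) : Gfun lam k 1 = 0 := by
  have h0 : lam + 1/2 ≠ 0 := ne_of_gt (by linarith)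
  simp only [Gfun]
  norm_num [Real.zero_rpow h0]

lemma H_neg_one (hlam : -1/2 < lam) : Hfun lam k (-1) = 0 := by
  have h0 : lam + 1 + 1/2 ≠ 0 := ne_of_gt (by linarith)
  simp only [Hfun]
  norm_num [Real.zero_rpow h0]

lemma H_one (hlam : -1/2 < lam) : Hfun lam k 1 = 0 := by
  have h0 : lam + 1 + 1/2 ≠ 0 := ne_of_gt (by linarith)
  simp only [Hfun]
  norm_num [Real.zero_rpow h0]

lemma int_dG_left (hlam : -1/2 < lam) (hs : -1 < s) (hs' : s < 1) :
    IntervalIntegrable (fun x => (s - x) * dGfun lam k x) volume (-1) s := by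
  have h := II_left (r := lam - 1/2) (by linarith)
    (Q := fun x => -((k:ℝ)*((k:ℝ)+2*lam)/2) * ((s - x) * gegenD lam k x))
    (continuous_const.mul ((continuous_const.sub continuous_id).mul (continuous_gegenD _ _)))
    hs.le hs'
  convert h using 1
  funext x
  simp only [dGfun]
  ring

lemma int_dG_right (hlam : -1/2 < lam) (hs : -1 < s) (hs' : s < 1) :
    IntervalIntegrable (fun x => (x - s) * dGfun lam k x) volume s 1 := by
  have h := II_right (r := lam - 1/2) (by linarith)
    (Q := fun x => -((k:ℝ)*((k:ℝ)+2*lam)/2) * ((x - s) * gegenD lam k x))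
    ((continuous_const.mul ((continuous_id.sub continuous_const).mul (continuous_gegenD _ _))))
    hs hs'.le
  convert h using 1
  funext x
  simp only [dGfun]
  ring

lemma step_left (hlam : -1/2 < lam) (hs : -1 < s) (hs' : s < 1) (hk : 2 ≤ k) :
    ∫ x in (-1:ℝ)..s, (s - x) * dGfun lam k x = ∫ x in (-1:ℝ)..s, Gfun lam k x := by
  have hint1 : IntervalIntegrable (fun x => -(Gfun lam k x)) volume (-1) s :=
    ((contG lam k hlam).neg).intervalIntegrable _ _
  have hint2 := int_dG_left lam s k hlam hs hs'
  have hftc := integral_eq_sub_of_hasDerivAt_of_le (a := (-1:ℝ)) (b := s)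
    (f := fun y => (s - y) * Gfun lam k y)
    (f' := fun x => -(Gfun lam k x) + (s - x) * dGfun lam k x) hs.le
    (((continuous_const.sub continuous_id).mul (contG lam k hlam)).continuousOn)
    (fun x hx => by
      have h := ((hasDerivAt_id x).const_sub s).mul (hG lam k hk hx.1 (hx.2.trans hs'))
      refine h.congr_deriv ?_
      simp only [id_eq]
      ring)
    (hint1.add hint2)
  simp only [G_neg_one lam k hlam, sub_self, zero_mul, mul_zero, sub_zero] at hftc
  rw [intervalIntegral.integral_add hint1 hint2, intervalIntegral.integral_neg] at hftc
  linarith [hftc]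

lemma step_right (hlam : -1/2 < lam) (hs : -1 < s) (hs' : s < 1) (hk : 2 ≤ k) :
    ∫ x in s..(1:ℝ), (x - s) * dGfun lam k x = -∫ x in s..(1:ℝ), Gfun lam k x := by
  have hint1 : IntervalIntegrable (fun x => Gfun lam k x) volume s 1 :=
    (contG lam k hlam).intervalIntegrable _ _
  have hint2 := int_dG_right lam s k hlam hs hs'
  have hftc := integral_eq_sub_of_hasDerivAt_of_le (a := s) (b := (1:ℝ))
    (f := fun y => (y - s) * Gfun lam k y)
    (f' := fun x => Gfun lam k x + (x - s) * dGfun lam k x) hs'.le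
    (((continuous_id.sub continuous_const).mul (contG lam k hlam)).continuousOn)
    (fun x hx => by
      have h := ((hasDerivAt_id x).sub_const s).mul (hG lam k hk (hs.trans hx.1) hx.2)
      refine h.congr_deriv ?_
      simp only [id_eq]
      ring)
    (hint1.add hint2)
  simp only [G_one lam k hlam, sub_self, zero_mul, mul_zero, zero_sub] at hftc
  rw [intervalIntegral.integral_add hint1 hint2] at hftc
  linarith [hftc]

lemma stepG_left (hlam : -1/2 < lam) (hs : -1 < s) (hs' : s < 1) (hk : 2 ≤ k) :
    ∫ x in (-1:ℝ)..s, Gfun lam k x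
      = -(2*(lam+1)/(((k:ℝ)-1)*((k:ℝ)+2*lam+1))) * Hfun lam k s := by
  have hk2 : (2:ℝ) ≤ (k:ℝ) := by exact_mod_cast hk
  have hne1 : ((k:ℝ)-1) ≠ 0 := by linarith
  have hne2 : ((k:ℝ)+2*lam+1) ≠ 0 := by linarith
  have hGd : ∀ x, Gfun lam k x
      = -(2*(lam+1)/(((k:ℝ)-1)*((k:ℝ)+2*lam+1))) * dHfun lam k x := by
    intro x
    simp only [Gfun, dHfun]
    rw [gegen_eq_mul (lam+1) (k-1) (by omega) x]
    have hne2' : (k:ℝ) + lam*2 + 1 ≠ 0 := by rw [mul_comm]; exact hne2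
    field_simp
  rw [intervalIntegral.integral_congr (fun x _ => hGd x), intervalIntegral.integral_const_mul]
  congr 1
  have hftc := integral_eq_sub_of_hasDerivAt_of_le (a := (-1:ℝ)) (b := s)
    (f := Hfun lam k) (f' := dHfun lam k) hs.le (contH lam k hlam).continuousOn
    (fun x hx => hH lam k hk hx.1 (hx.2.trans hs'))
    ((contdH lam k hlam).intervalIntegrable _ _)
  rw [hftc, H_neg_one lam k hlam, sub_zero]

lemma stepG_right (hlam : -1/2 < lam) (hs : -1 < s) (hs' : s < 1) (hk : 2 ≤ k) :
    -∫ x in s..(1:ℝ), Gfun lam k x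
      = -(2*(lam+1)/(((k:ℝ)-1)*((k:ℝ)+2*lam+1))) * Hfun lam k s := by
  have hk2 : (2:ℝ) ≤ (k:ℝ) := by exact_mod_cast hk
  have hne1 : ((k:ℝ)-1) ≠ 0 := by linarith
  have hne2 : ((k:ℝ)+2*lam+1) ≠ 0 := by linarith
  have hGd : ∀ x, Gfun lam k x
      = -(2*(lam+1)/(((k:ℝ)-1)*((k:ℝ)+2*lam+1))) * dHfun lam k x := by
    intro x
    simp only [Gfun, dHfun]
    rw [gegen_eq_mul (lam+1) (k-1) (by omega) x]
    have hne2' : (k:ℝ) + lam*2 + 1 ≠ 0 := by rw [mul_comm]; exact hne2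
    field_simp
  rw [intervalIntegral.integral_congr (fun x _ => hGd x), intervalIntegral.integral_const_mul]
  have hftc := integral_eq_sub_of_hasDerivAt_of_le (a := s) (b := (1:ℝ))
    (f := Hfun lam k) (f' := dHfun lam k) hs'.le (contH lam k hlam).continuousOn
    (fun x hx => hH lam k hk (hs.trans hx.1) hx.2)
    ((contdH lam k hlam).intervalIntegrable _ _)
  rw [hftc, H_one lam k hlam, zero_sub]
  ring

lemma integral_left (hlam : -1/2 < lam) (hs : -1 < s) (hs' : s < 1) (hk : 2 ≤ k) :
    ∫ x in (-1:ℝ)..s, (s - x) * (1 - x^2)^(lam - 1/2) * gegen lam k x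
    = 4*lam*(lam+1) / (((k:ℝ)-1)*(k:ℝ)*((k:ℝ)+2*lam)*((k:ℝ)+2*lam+1))
      * (1-s^2)^(lam+3/2) * gegen (lam+2) (k-2) s := by
  have hk2 : (2:ℝ) ≤ (k:ℝ) := by exact_mod_cast hk
  have hne1 : ((k:ℝ)) ≠ 0 := by linarith
  have hne2 : ((k:ℝ)+2*lam) ≠ 0 := by linarith
  have hne3 : ((k:ℝ)-1) ≠ 0 := by linarith
  have hne4 : ((k:ℝ)+2*lam+1) ≠ 0 := by linarith
  have hpt : ∀ x, (s - x) * (1 - x^2)^(lam - 1/2) * gegen lam k x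
      = (-(2*lam/((k:ℝ)*((k:ℝ)+2*lam)))) * ((s - x) * dGfun lam k x) := by
    intro x
    rw [gegen_eq_mul lam k (by omega) x]
    simp only [dGfun]
    have hne2' : (k:ℝ) + lam*2 ≠ 0 := by rw [mul_comm]; exact hne2
    field_simp
  rw [intervalIntegral.integral_congr (fun x _ => hpt x), intervalIntegral.integral_const_mul,
    step_left lam s k hlam hs hs' hk, stepG_left lam s k hlam hs hs' hk]
  simp only [Hfun]
  rw [show lam+1+1/2 = lam + 3/2 by ring, show lam+1+1 = lam+2 by ring]
  field_simp
  ring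

lemma integral_right (hlam : -1/2 < lam) (hs : -1 < s) (hs' : s < 1) (hk : 2 ≤ k) :
    ∫ x in s..(1:ℝ), (x - s) * (1 - x^2)^(lam - 1/2) * gegen lam k x
    = 4*lam*(lam+1) / (((k:ℝ)-1)*(k:ℝ)*((k:ℝ)+2*lam)*((k:ℝ)+2*lam+1))
      * (1-s^2)^(lam+3/2) * gegen (lam+2) (k-2) s := by
  have hk2 : (2:ℝ) ≤ (k:ℝ) := by exact_mod_cast hk
  have hne1 : ((k:ℝ)) ≠ 0 := by linarith
  have hne2 : ((k:ℝ)+2*lam) ≠ 0 := by linarith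
  have hne3 : ((k:ℝ)-1) ≠ 0 := by linarith
  have hne4 : ((k:ℝ)+2*lam+1) ≠ 0 := by linarith
  have hpt : ∀ x, (x - s) * (1 - x^2)^(lam - 1/2) * gegen lam k x
      = (-(2*lam/((k:ℝ)*((k:ℝ)+2*lam)))) * ((x - s) * dGfun lam k x) := by
    intro x
    rw [gegen_eq_mul lam k (by omega) x]
    simp only [dGfun]
    have hne2' : (k:ℝ) + lam*2 ≠ 0 := by rw [mul_comm]; exact hne2
    field_simp
  rw [intervalIntegral.integral_congr (fun x _ => hpt x), intervalIntegral.integral_const_mul,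
    step_right lam s k hlam hs hs' hk, stepG_right lam s k hlam hs hs' hk]
  simp only [Hfun]
  rw [show lam+1+1/2 = lam + 3/2 by ring, show lam+1+1 = lam+2 by ring]
  field_simp
  ring

end main

theorem gegenbauer_onesided_integrals (lam s : ℝ) (hlam : -1/2 < lam)
    (hs : -1 < s) (hs' : s < 1) (k : ℕ) (hk : 2 ≤ k) :
    (∫ x in (-1:ℝ)..s, (s - x) * (1 - x^2) ^ (lam - 1/2) * gegen lam k x
        = ∫ x in s..(1:ℝ), (x - s) * (1 - x^2) ^ (lam - 1/2) * gegen lam k x) ∧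
    (∫ x in s..(1:ℝ), (x - s) * (1 - x^2) ^ (lam - 1/2) * gegen lam k x
        = 4*lam*(lam + 1)
            / (((k:ℝ) - 1)*(k:ℝ)*((k:ℝ) + 2*lam)*((k:ℝ) + 2*lam + 1))
          * (1 - s^2) ^ (lam + 3/2) * gegen (lam + 2) (k - 2) s) := by
  have h1 := integral_left lam s k hlam hs hs' hk
  have h2 := integral_right lam s k hlam hs hs' hk
  constructor
  · rw [h1, h2]
  · rw [h2]
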